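/- Let K be a finite field with q elements and let L be a field extension of K of degree n, with integers r, n satisfying 2 ≤ r and n ≥ r+2. Then every (n−r)-dimensional L-vector space contains an (n−r−1)-scattered K-subspace of K-dimension n. -/

import Mathlib

def IsHScattered (K L V : Type*) [Field K] [Field L] [Algebra K L]
    [AddCommGroup V] [Module L V] [Module K V] [IsScalarTower K L V]
    (h : ℕ) (U : Submodule K V) : Prop :=
  Submodule.span L (U : Set V) = ⊤ ∧
  ∀ S : Submodule L V, Module.finrank L S = h →
    Module.finrank K ↥(U ⊓ S.restrictScalars K) ≤ h

open Polynomial Module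

theorem stmt9 (n r : ℕ) (K L V : Type*) [Field K] [Fintype K] [Field L] [Algebra K L]
    [AddCommGroup V] [Module L V] [Module K V] [IsScalarTower K L V]
    [FiniteDimensional K L] [FiniteDimensional L V]
    (hn : Module.finrank K L = n) (hr2 : 2 ≤ r) (hnr : r + 2 ≤ n)
    (hV : Module.finrank L V = n - r) :
    ∃ U : Submodule K V, IsHScattered K L V (n - r - 1) U ∧
      Module.finrank K ↥U = n := by
  classical
  have hq1 : 1 < Fintype.card K := Fintype.one_lt_card
  set q := Fintype.card K with hqdef
  set m := n - r with hmdef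
  have hm2 : 2 ≤ m := by omega
  have hm1n : m - 1 < n := by omega
  -- characteristic facts
  obtain ⟨p, hp⟩ := CharP.exists K
  haveI := hp
  obtain ⟨k, hpp, hcard⟩ := FiniteField.card K p
  haveI : CharP L p := charP_of_injective_algebraMap (algebraMap K L).injective p
  haveI : Fact p.Prime := ⟨hpp⟩
  haveI : ExpChar L p := ExpChar.prime hpp
  have hfrobadd : ∀ (i : ℕ) (x y : L), (x + y) ^ q ^ i = x ^ q ^ i + y ^ q ^ i := by
    intro i x y
    rw [hqdef, hcard, ← pow_mul]
    exact add_pow_char_pow x y p _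
  have hfrobsmul : ∀ (i : ℕ) (c : K) (x : L), (c • x) ^ q ^ i = c • x ^ q ^ i := by
    intro i c x
    rw [Algebra.smul_def, Algebra.smul_def, mul_pow, ← map_pow,
      FiniteField.pow_card_pow]
  -- finiteness of L
  haveI : Finite L := Module.finite_of_finite K
  haveI : Fintype L := Fintype.ofFinite L
  have hLcard : Fintype.card L = q ^ n := by
    rw [card_eq_pow_finrank (K := K) (V := L), hn]
  -- basis of V over L
  have hVm : Module.finrank L V = m := hV
  let b : Basis (Fin m) L V := (Module.finBasis L V).reindex (finCongr hVm)
  -- the q-linearized map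
  let φ : L →ₗ[K] V :=
    { toFun := fun x => ∑ i : Fin m, (x ^ q ^ (i : ℕ)) • b i
      map_add' := by
        intro x y
        rw [← Finset.sum_add_distrib]
        exact Finset.sum_congr rfl fun i _ => by rw [hfrobadd, add_smul]
      map_smul' := by
        intro c x
        show ∑ i : Fin m, ((c • x) ^ q ^ (i : ℕ)) • b i
          = c • ∑ i : Fin m, (x ^ q ^ (i : ℕ)) • b i
        rw [Finset.smul_sum]
        exact Finset.sum_congr rfl fun i _ => by rw [hfrobsmul, smul_assoc] }
  have hφapply : ∀ x : L, φ x = ∑ i : Fin m, (x ^ q ^ (i : ℕ)) • b i := fun _ => rfl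
  have hφinj : Function.Injective φ := by
    rw [injective_iff_map_eq_zero]
    intro x hx
    have h0 := Fintype.linearIndependent_iff.mp b.linearIndependent
      (fun i => x ^ q ^ (i : ℕ)) hx ⟨0, by omega⟩
    simpa using h0
  set U := LinearMap.range φ with hUdef
  have hUrank : Module.finrank K ↥U = n := by
    rw [hUdef, LinearMap.finrank_range_of_inj hφinj, hn]
  -- the linearized polynomial attached to a : Fin m → L
  let P : (Fin m → L) → L[X] := fun a => ∑ i : Fin m, C (a i) * X ^ (q ^ (i : ℕ))
  have heval : ∀ (a : Fin m → L) (x : L),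
      (P a).eval x = ∑ i : Fin m, a i * x ^ q ^ (i : ℕ) := by
    intro a x
    simp [P, eval_finset_sum]
  have hcoeff : ∀ (a : Fin m → L) (j : Fin m), (P a).coeff (q ^ (j : ℕ)) = a j := by
    intro a j
    rw [show P a = ∑ i : Fin m, C (a i) * X ^ (q ^ (i : ℕ)) from rfl, finset_sum_coeff]
    have : ∀ i : Fin m, (C (a i) * X ^ (q ^ (i : ℕ))).coeff (q ^ (j : ℕ))
        = if i = j then a i else 0 := by
      intro i
      rw [coeff_C_mul, coeff_X_pow]
      by_cases h : i = j
      · simp [h]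
      · have : q ^ (j : ℕ) ≠ q ^ (i : ℕ) := by
          intro hqe
          exact h (Fin.ext (Nat.pow_right_injective hq1 hqe.symm))
        simp [this, h]
    rw [Finset.sum_congr rfl fun i _ => this i]
    simp
  have hPdeg : ∀ a : Fin m → L, (P a).natDegree ≤ q ^ (m - 1) := by
    intro a
    refine natDegree_sum_le_of_forall_le _ _ fun i _ => ?_
    refine (natDegree_C_mul_X_pow_le _ _).trans ?_
    exact Nat.pow_le_pow_right (by omega) (by omega)
  have hPne : ∀ a : Fin m → L, a ≠ 0 → P a ≠ 0 := by
    intro a ha hP0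
    apply ha
    funext j
    have := hcoeff a j
    rw [hP0, coeff_zero] at this
    simp [← this]
  -- root-counting bound
  have hroots : ∀ a : Fin m → L, a ≠ 0 → ∀ Z : Finset L,
      (∀ x ∈ Z, (P a).eval x = 0) → Z.card ≤ q ^ (m - 1) := by
    intro a ha Z hZ
    have hsub : Z ⊆ (P a).roots.toFinset := by
      intro x hx
      rw [Multiset.mem_toFinset, mem_roots (hPne a ha)]
      exact hZ x hx
    calc Z.card ≤ (P a).roots.toFinset.card := Finset.card_le_card hsub
      _ ≤ Multiset.card (P a).roots := Multiset.toFinset_card_le _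
      _ ≤ (P a).natDegree := card_roots' (P a)
      _ ≤ q ^ (m - 1) := hPdeg a
  refine ⟨U, ⟨?_, ?_⟩, hUrank⟩
  · -- span condition
    by_contra hne
    obtain ⟨f, hf0, hfmap⟩ := Submodule.exists_dual_map_eq_bot_of_lt_top
      (lt_top_iff_ne_top.mpr hne) inferInstance
    set a : Fin m → L := fun i => f (b i) with hadef
    have hfφ : ∀ x : L, (P a).eval x = 0 := by
      intro x
      have hmem : φ x ∈ Submodule.span L (U : Set V) :=
        Submodule.subset_span ⟨x, rfl⟩
      have hfx : f (φ x) = 0 := by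
        have : f (φ x) ∈ Submodule.map f (Submodule.span L (U : Set V)) :=
          Submodule.mem_map_of_mem hmem
        rw [hfmap] at this
        exact (Submodule.mem_bot L).mp this
      rw [heval]
      rw [hφapply, map_sum] at hfx
      rw [← hfx]
      exact Finset.sum_congr rfl fun i _ => by rw [map_smul, smul_eq_mul, mul_comm]
    have ha0 : a = 0 := by
      by_contra ha
      have := hroots a ha Finset.univ (fun x _ => hfφ x)
      rw [Finset.card_univ, hLcard] at this
      have : q ^ n ≤ q ^ (m - 1) := this
      have := (Nat.pow_le_pow_iff_right hq1).mp this
      omega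
    apply hf0
    refine b.ext fun i => ?_
    have : a i = 0 := by rw [ha0]; rfl
    simpa [hadef] using this
  · -- intersection with (m-1)-dimensional L-subspaces
    intro S hS
    have hSlt : S < ⊤ := by
      rcases lt_or_eq_of_le (le_top : S ≤ ⊤) with h | h
      · exact h
      · exfalso
        rw [h, finrank_top, hVm] at hS
        omega
    obtain ⟨f, hf0, hfmap⟩ := Submodule.exists_dual_map_eq_bot_of_lt_top hSlt inferInstance
    set a : Fin m → L := fun i => f (b i) with hadef
    have ha : a ≠ 0 := by
      intro h
      apply hf0
      refine b.ext fun i => ?_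
      have : a i = 0 := by rw [h]; rfl
      simpa [hadef] using this
    set g : L →ₗ[K] L := (f.restrictScalars K) ∘ₗ φ with hgdef
    have hgeval : ∀ x : L, g x = (P a).eval x := by
      intro x
      rw [heval]
      show f (φ x) = _
      rw [hφapply, map_sum]
      exact Finset.sum_congr rfl fun i _ => by rw [map_smul, smul_eq_mul, mul_comm]
    have hle : U ⊓ S.restrictScalars K ≤ Submodule.map φ (LinearMap.ker g) := by
      rintro v ⟨hv1, hv2⟩
      obtain ⟨x, rfl⟩ := hv1
      refine ⟨x, ?_, rfl⟩
      have hfx : f (φ x) = 0 := by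
        have : f (φ x) ∈ Submodule.map f S := Submodule.mem_map_of_mem hv2
        rw [hfmap] at this
        exact (Submodule.mem_bot L).mp this
      exact LinearMap.mem_ker.mpr hfx
    have hker : Module.finrank K ↥(LinearMap.ker g) ≤ m - 1 := by
      haveI : Fintype ↥(LinearMap.ker g) := Fintype.ofFinite _
      have hcardker : Fintype.card ↥(LinearMap.ker g)
          = q ^ Module.finrank K ↥(LinearMap.ker g) :=
        card_eq_pow_finrank (K := K) (V := ↥(LinearMap.ker g))
      have hZ : ((LinearMap.ker g : Set L)).toFinset.card ≤ q ^ (m - 1) := by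
        refine hroots a ha _ fun x hx => ?_
        rw [Set.mem_toFinset, SetLike.mem_coe, LinearMap.mem_ker] at hx
        rw [← hgeval, hx]
      have hcc : Fintype.card ((LinearMap.ker g : Set L)) =
          Fintype.card ↥(LinearMap.ker g) := Fintype.card_congr (Equiv.refl _)
      rw [Set.toFinset_card, hcc, hcardker] at hZ
      exact (Nat.pow_le_pow_iff_right hq1).mp hZ
    calc Module.finrank K ↥(U ⊓ S.restrictScalars K)
        ≤ Module.finrank K ↥(Submodule.map φ (LinearMap.ker g)) :=
          Submodule.finrank_mono hle
      _ ≤ Module.finrank K ↥(LinearMap.ker g) := Submodule.finrank_map_le φ _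
      _ ≤ m - 1 := hker
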